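/- Let d ≥ 1 and let μ : [0,∞) → M₊(ℝ^d) be continuous for the topology of weak convergence and nondecreasing. Suppose 0 ≤ s ≤ t < ∞, 0 ≤ sᵢ ≤ tᵢ < ∞ for i ∈ ℕ, A and all Aᵢ are Borel subsets of ℝ^d, and [s,t) × A = ⋃_{i∈ℕ} ([sᵢ,tᵢ) × Aᵢ) where the sets [sᵢ,tᵢ) × Aᵢ are pairwise disjoint. Then μ_t(A) − μ_s(A) = Σ_{i∈ℕ} (μ_{tᵢ}(Aᵢ) − μ_{sᵢ}(Aᵢ)). -/

import Mathlib

open MeasureTheory Filter Topology Set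
open scoped NNReal ENNReal

private lemma telescope_ennreal (g : ℕ → ℝ≥0∞) (hg : Monotone g) (m M : ℕ) (h : m ≤ M) :
    ∑ k ∈ Finset.Ico m M, (g (k+1) - g k) = g M - g m := by
  induction M, h using Nat.le_induction with
  | base => simp
  | succ M hmM ih =>
      rw [Finset.sum_Ico_succ_top hmM, ih, add_comm]
      exact tsub_add_tsub_cancel (hg (Nat.le_succ M)) (hg hmM)

section Aux

variable {Ω : Type*} [MeasurableSpace Ω]

/-- The approximating discretized measure on `ℝ≥0 × Ω`. -/
noncomputable def lamN (μ : ℝ≥0 → FiniteMeasure Ω) (n : ℕ) : Measure (ℝ≥0 × Ω) :=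
  Measure.sum fun k : ℕ =>
    (Measure.dirac ((k : ℝ≥0) / ((n : ℝ≥0) + 1))).prod
      ((μ (((k : ℝ≥0) + 1) / ((n : ℝ≥0) + 1))).toMeasure
        - (μ ((k : ℝ≥0) / ((n : ℝ≥0) + 1))).toMeasure)

lemma lamN_apply (μ : ℝ≥0 → FiniteMeasure Ω)
    (hle : ∀ ⦃u v : ℝ≥0⦄, u ≤ v → (μ u).toMeasure ≤ (μ v).toMeasure)
    (n : ℕ) {a b : ℝ≥0} (hab : a ≤ b) {B : Set Ω} (hB : MeasurableSet B) :
    lamN μ n (Ico a b ×ˢ B)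
      = (μ ((⌈b * ((n:ℝ≥0)+1)⌉₊ : ℝ≥0) / ((n:ℝ≥0)+1))).toMeasure B
        - (μ ((⌈a * ((n:ℝ≥0)+1)⌉₊ : ℝ≥0) / ((n:ℝ≥0)+1))).toMeasure B := by
  set N : ℝ≥0 := (n:ℝ≥0)+1 with hNdef
  have hN0 : N ≠ 0 := by positivity
  set g : ℕ → ℝ≥0∞ := fun k => (μ ((k:ℝ≥0) / N)).toMeasure B with hg
  have happ : ∀ {u v : ℝ≥0}, u ≤ v → (μ u).toMeasure B ≤ (μ v).toMeasure B := by
    intro u v huv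
    exact Measure.le_iff'.1 (hle huv) B
  have hgmono : Monotone g := by
    intro i j hij
    have hc : (i:ℝ≥0) ≤ (j:ℝ≥0) := Nat.cast_le.mpr hij
    exact happ (by gcongr)
  have hsummand : ∀ k : ℕ, (μ (((k:ℝ≥0)+1) / N)).toMeasure B = g (k+1) := by
    intro k
    have : (((k+1 : ℕ)) : ℝ≥0) = (k:ℝ≥0)+1 := by push_cast; ring
    rw [hg, ← this]
  have hcalc : lamN μ n (Ico a b ×ˢ B)
      = ∑' k : ℕ, (Ico a b).indicator 1 ((k : ℝ≥0) / N) * (g (k+1) - g k) := by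
    rw [lamN, Measure.sum_apply _ (measurableSet_Ico.prod hB)]
    congr 1
    ext k
    rw [Measure.prod_prod, Measure.dirac_apply' _ measurableSet_Ico,
      Measure.sub_apply hB (hle (by gcongr; exact le_self_add)), hsummand k]
  have hmem : ∀ k : ℕ, ((k : ℝ≥0) / N ∈ Ico a b) ↔ k ∈ Finset.Ico ⌈a*N⌉₊ ⌈b*N⌉₊ := by
    intro k
    rw [Set.mem_Ico, Finset.mem_Ico, Nat.ceil_le, Nat.lt_ceil,
      le_div_iff₀ (zero_lt_iff.mpr hN0), div_lt_iff₀ (zero_lt_iff.mpr hN0)]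
  rw [hcalc, tsum_eq_sum (s := Finset.Ico ⌈a*N⌉₊ ⌈b*N⌉₊) ?_]
  · have : ∀ k ∈ Finset.Ico ⌈a*N⌉₊ ⌈b*N⌉₊,
        (Ico a b).indicator 1 ((k : ℝ≥0) / N) * (g (k+1) - g k) = g (k+1) - g k := by
      intro k hk
      rw [Set.indicator_of_mem ((hmem k).mpr hk), Pi.one_apply, one_mul]
    rw [Finset.sum_congr rfl this,
      telescope_ennreal g hgmono _ _ (Nat.ceil_le_ceil (mul_le_mul_left hab N))]
  · intro k hk
    rw [Set.indicator_of_notMem (fun hmem' => hk ((hmem k).mp hmem')), zero_mul]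

variable [TopologicalSpace Ω] [OpensMeasurableSpace Ω]

omit [TopologicalSpace Ω] [OpensMeasurableSpace Ω] in
lemma mass_bound (μ : ℝ≥0 → FiniteMeasure Ω)
    (hle : ∀ ⦃u v : ℝ≥0⦄, u ≤ v → (μ u).toMeasure ≤ (μ v).toMeasure)
    {u v : ℝ≥0} (huv : u ≤ v) {B : Set Ω} (hB : MeasurableSet B) :
    (μ v) B + (μ u) univ ≤ (μ u) B + (μ v) univ := by
  rw [← ENNReal.coe_le_coe]
  push_cast [FiniteMeasure.ennreal_coeFn_eq_coeFn_toMeasure]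
  have h1 := measure_add_measure_compl (μ := (μ u).toMeasure) hB
  have h2 := measure_add_measure_compl (μ := (μ v).toMeasure) hB
  calc (μ v).toMeasure B + (μ u).toMeasure univ
      = (μ u).toMeasure B + ((μ v).toMeasure B + (μ u).toMeasure Bᶜ) := by rw [← h1]; ring
    _ ≤ (μ u).toMeasure B + ((μ v).toMeasure B + (μ v).toMeasure Bᶜ) := by
        gcongr
        exact hle huv
    _ = (μ u).toMeasure B + (μ v).toMeasure univ := by rw [← h2]

lemma endpoint_tendsto (μ : ℝ≥0 → FiniteMeasure Ω) (hcont : Continuous μ)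
    (hle : ∀ ⦃u v : ℝ≥0⦄, u ≤ v → (μ u).toMeasure ≤ (μ v).toMeasure)
    (c : ℝ≥0) {B : Set Ω} (hB : MeasurableSet B) :
    Tendsto (fun n : ℕ => (μ ((⌈c * ((n:ℝ≥0)+1)⌉₊ : ℝ≥0) / ((n:ℝ≥0)+1))).toMeasure B)
      atTop (𝓝 ((μ c).toMeasure B)) := by
  set cseq : ℕ → ℝ≥0 := fun n => (⌈c * ((n:ℝ≥0)+1)⌉₊ : ℝ≥0) / ((n:ℝ≥0)+1) with hcseq
  have hN0 : ∀ n : ℕ, ((n:ℝ≥0)+1) ≠ 0 := fun n => by positivity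
  have hlowc : ∀ n, c ≤ cseq n := by
    intro n
    rw [hcseq]
    rw [le_div_iff₀ (zero_lt_iff.mpr (hN0 n))]
    exact Nat.le_ceil _
  have hupc : ∀ n, cseq n ≤ c + ((n:ℝ≥0)+1)⁻¹ := by
    intro n
    rw [hcseq]
    rw [div_le_iff₀ (zero_lt_iff.mpr (hN0 n))]
    calc (⌈c * ((n:ℝ≥0)+1)⌉₊ : ℝ≥0) ≤ c * ((n:ℝ≥0)+1) + 1 :=
          (Nat.ceil_lt_add_one (by positivity)).le
      _ = (c + ((n:ℝ≥0)+1)⁻¹) * ((n:ℝ≥0)+1) := by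
          rw [add_mul, inv_mul_cancel₀ (hN0 n)]
  have hcseq_tendsto : Tendsto cseq atTop (𝓝 c) := by
    rw [← NNReal.tendsto_coe]
    apply tendsto_of_tendsto_of_tendsto_of_le_of_le (g := fun _ : ℕ => (c:ℝ))
      (h := fun n : ℕ => (c:ℝ) + (1/((n:ℝ)+1))) tendsto_const_nhds
    · have := tendsto_one_div_add_atTop_nhds_zero_nat (𝕜 := ℝ)
      simpa using tendsto_const_nhds.add this
    · exact fun n => NNReal.coe_le_coe.mpr (hlowc n)
    · intro n
      have := NNReal.coe_le_coe.mpr (hupc n)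
      push_cast at this ⊢
      simpa [one_div] using this
  have hmass : Tendsto (fun n => ((μ (cseq n)) univ : ℝ)) atTop (𝓝 ((μ c) univ : ℝ)) := by
    rw [NNReal.tendsto_coe]
    exact ((FiniteMeasure.continuous_mass.comp hcont).tendsto c).comp hcseq_tendsto
  have happ : ∀ {u v : ℝ≥0}, u ≤ v → (μ u) B ≤ (μ v) B := by
    intro u v huv
    rw [← ENNReal.coe_le_coe]
    push_cast [FiniteMeasure.ennreal_coeFn_eq_coeFn_toMeasure]
    exact Measure.le_iff'.1 (hle huv) B
  have hreal : Tendsto (fun n => ((μ (cseq n)) B : ℝ)) atTop (𝓝 ((μ c) B : ℝ)) := by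
    apply tendsto_of_tendsto_of_tendsto_of_le_of_le
      (g := fun _ : ℕ => ((μ c) B : ℝ))
      (h := fun n => ((μ c) B : ℝ) + (((μ (cseq n)) univ : ℝ) - ((μ c) univ : ℝ)))
      tendsto_const_nhds
    · have h2 : Tendsto (fun n => ((μ (cseq n)) univ : ℝ) - ((μ c) univ : ℝ)) atTop (𝓝 0) := by
        simpa using hmass.sub (tendsto_const_nhds (x := ((μ c) univ : ℝ)))
      simpa using (tendsto_const_nhds (x := ((μ c) B : ℝ))).add h2
    · exact fun n => NNReal.coe_le_coe.mpr (happ (hlowc n))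
    · intro n
      have := NNReal.coe_le_coe.mpr (mass_bound μ hle (hlowc n) hB)
      push_cast at this
      simp only []
      linarith
  have hnn : Tendsto (fun n => (μ (cseq n)) B) atTop (𝓝 ((μ c) B)) :=
    NNReal.tendsto_coe.mp hreal
  have := ENNReal.tendsto_coe.mpr hnn
  simpa [FiniteMeasure.ennreal_coeFn_eq_coeFn_toMeasure] using this

/-- Key limit: the discretized measures of a half-open rectangle converge to the
increment of the family. -/
lemma lamN_tendsto (μ : ℝ≥0 → FiniteMeasure Ω) (hcont : Continuous μ)
    (hle : ∀ ⦃u v : ℝ≥0⦄, u ≤ v → (μ u).toMeasure ≤ (μ v).toMeasure)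
    {a b : ℝ≥0} (hab : a ≤ b) {B : Set Ω} (hB : MeasurableSet B) :
    Tendsto (fun n : ℕ => lamN μ n (Ico a b ×ˢ B)) atTop
      (𝓝 ((μ b).toMeasure B - (μ a).toMeasure B)) := by
  have h := ENNReal.Tendsto.sub (endpoint_tendsto μ hcont hle b hB)
    (endpoint_tendsto μ hcont hle a hB) (Or.inr (measure_ne_top _ _))
  apply h.congr
  intro n
  exact (lamN_apply μ hle n hab hB).symm

/-- Left-approximation of the total mass. -/
lemma exists_left_mass (μ : ℝ≥0 → FiniteMeasure Ω) (hcont : Continuous μ)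
    (c : ℝ≥0) {δ : ℝ≥0} (hδ : 0 < δ) (hc : c ≠ 0) :
    ∃ s' : ℝ≥0, s' < c ∧ (μ c).mass ≤ (μ s').mass + δ := by
  set u : ℕ → ℝ≥0 := fun n => c * ((n:ℝ≥0) / ((n:ℝ≥0)+1)) with hu
  have hult : ∀ n, u n < c := by
    intro n
    rw [hu]
    have h1 : ((n:ℝ≥0) / ((n:ℝ≥0)+1)) < 1 := by
      rw [div_lt_one (by positivity)]
      exact lt_add_of_pos_right _ one_pos
    calc c * ((n:ℝ≥0) / ((n:ℝ≥0)+1)) < c * 1 :=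
          mul_lt_mul_of_pos_left h1 (zero_lt_iff.mpr hc)
      _ = c := mul_one c
  have hutend : Tendsto u atTop (𝓝 c) := by
    rw [← NNReal.tendsto_coe]
    have h1 : Tendsto (fun n : ℕ => (n:ℝ) / ((n:ℝ)+1)) atTop (𝓝 1) := by
      have := tendsto_natCast_div_add_atTop (𝕜 := ℝ) 1
      simpa using this
    have h2 : Tendsto (fun n : ℕ => (c:ℝ) * ((n:ℝ) / ((n:ℝ)+1))) atTop (𝓝 ((c:ℝ) * 1)) :=
      tendsto_const_nhds.mul h1
    simp only [mul_one] at h2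
    apply h2.congr
    intro n
    rw [hu]
    push_cast
    ring
  have hmt : Tendsto (fun n => (μ (u n)).mass) atTop (𝓝 ((μ c).mass)) :=
    ((FiniteMeasure.continuous_mass.comp hcont).tendsto c).comp hutend
  by_cases hsmall : (μ c).mass ≤ δ
  · exact ⟨0, zero_lt_iff.mpr hc, le_add_left hsmall⟩
  push_neg at hsmall
  have hlt : (μ c).mass - δ < (μ c).mass := tsub_lt_self (lt_trans hδ hsmall) hδ
  have hev : ∀ᶠ n in atTop, (μ c).mass - δ < (μ (u n)).mass :=
    hmt.eventually (eventually_gt_nhds hlt)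
  obtain ⟨n, hn⟩ := hev.exists
  refine ⟨u n, hult n, ?_⟩
  have h2 : (μ c).mass - δ ≤ (μ (u n)).mass := hn.le
  rw [tsub_le_iff_right] at h2
  exact h2

end Aux

/-- Countable additivity on half-open rectangles: if `[s,t) × A` is the disjoint
countable union of the rectangles `[sᵢ,tᵢ) × Aᵢ`, then
`μ_t(A) − μ_s(A) = Σᵢ (μ_{tᵢ}(Aᵢ) − μ_{sᵢ}(Aᵢ))`, for a weakly continuous
nondecreasing family `μ` of finite measures on `ℝ^d`. -/
theorem markovian_projection_stmt2 (d : ℕ) (hd : 1 ≤ d)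
    (μ : ℝ≥0 → FiniteMeasure (Fin d → ℝ))
    (hcont : Continuous μ)
    (hmono : ∀ s t : ℝ≥0, s ≤ t →
      ∀ A : Set (Fin d → ℝ), MeasurableSet A → μ s A ≤ μ t A)
    (s t : ℝ≥0) (hst : s ≤ t)
    (sseq tseq : ℕ → ℝ≥0) (hseq : ∀ i, sseq i ≤ tseq i)
    (A : Set (Fin d → ℝ)) (hA : MeasurableSet A)
    (Aseq : ℕ → Set (Fin d → ℝ)) (hAseq : ∀ i, MeasurableSet (Aseq i))
    (hunion : Set.Ico s t ×ˢ A = ⋃ i, Set.Ico (sseq i) (tseq i) ×ˢ Aseq i)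
    (hdisj : Pairwise fun i j =>
      Disjoint (Set.Ico (sseq i) (tseq i) ×ˢ Aseq i)
        (Set.Ico (sseq j) (tseq j) ×ˢ Aseq j)) :
    (μ t A : ℝ≥0∞) - (μ s A : ℝ≥0∞) =
      ∑' i, ((μ (tseq i) (Aseq i) : ℝ≥0∞) - (μ (sseq i) (Aseq i) : ℝ≥0∞)) := by
  classical
  have hle : ∀ ⦃u v : ℝ≥0⦄, u ≤ v → (μ u).toMeasure ≤ (μ v).toMeasure := by
    intro u v huv
    rw [Measure.le_iff]
    intro B hB
    rw [← FiniteMeasure.ennreal_coeFn_eq_coeFn_toMeasure,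
      ← FiniteMeasure.ennreal_coeFn_eq_coeFn_toMeasure]
    exact ENNReal.coe_le_coe.mpr (hmono u v huv B hB)
  simp only [FiniteMeasure.ennreal_coeFn_eq_coeFn_toMeasure]
  set Tm : ℝ≥0 → Set (Fin d → ℝ) → ℝ≥0∞ := fun u B => (μ u).toMeasure B with hTm
  -- the rectangles
  set R : ℕ → Set (ℝ≥0 × (Fin d → ℝ)) := fun i => Ico (sseq i) (tseq i) ×ˢ Aseq i with hR
  have hRmeas : ∀ i, MeasurableSet (R i) := fun i => measurableSet_Ico.prod (hAseq i)
  set S : ℝ≥0∞ := ∑' i, (Tm (tseq i) (Aseq i) - Tm (sseq i) (Aseq i)) with hS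
  -- helper inequalities
  have happ : ∀ (u v : ℝ≥0), u ≤ v → ∀ B : Set (Fin d → ℝ), Tm u B ≤ Tm v B := by
    intro u v huv B
    exact Measure.le_iff'.1 (hle huv) B
  have hsplit : ∀ (u v w : ℝ≥0) (B : Set (Fin d → ℝ)), u ≤ v → v ≤ w →
      Tm w B - Tm u B = (Tm v B - Tm u B) + (Tm w B - Tm v B) := by
    intro u v w B huv hvw
    rw [add_comm]
    exact (tsub_add_tsub_cancel (happ v w hvw B) (happ u v huv B)).symm
  have hdom : ∀ (u v : ℝ≥0), u ≤ v → ∀ (B : Set (Fin d → ℝ)), MeasurableSet B →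
      Tm v B - Tm u B ≤ Tm v univ - Tm u univ := by
    intro u v huv B hB
    have h1 : ((μ v).toMeasure - (μ u).toMeasure) B = Tm v B - Tm u B :=
      Measure.sub_apply hB (hle huv)
    have h2 : ((μ v).toMeasure - (μ u).toMeasure) univ = Tm v univ - Tm u univ :=
      Measure.sub_apply MeasurableSet.univ (hle huv)
    rw [← h1, ← h2]
    exact measure_mono (subset_univ B)
  -- the two directions
  have hge : S ≤ Tm t A - Tm s A := by
    rw [hS, ENNReal.tsum_eq_iSup_sum]
    apply iSup_le
    intro I
    have htendsum : Tendsto (fun n => ∑ i ∈ I, lamN μ n (R i)) atTop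
        (𝓝 (∑ i ∈ I, (Tm (tseq i) (Aseq i) - Tm (sseq i) (Aseq i)))) :=
      tendsto_finset_sum I (fun i _ => lamN_tendsto μ hcont hle (hseq i) (hAseq i))
    have htendall : Tendsto (fun n => lamN μ n (Ico s t ×ˢ A)) atTop
        (𝓝 (Tm t A - Tm s A)) := lamN_tendsto μ hcont hle hst hA
    apply le_of_tendsto_of_tendsto' htendsum htendall
    intro n
    rw [← measure_biUnion_finset (hdisj.pairwiseDisjoint I) (fun i _ => hRmeas i)]
    apply measure_mono
    rw [hunion]
    exact iUnion₂_subset fun i _ => subset_iUnion R i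
  refine le_antisymm ?_ hge
  -- the hard direction
  rcases eq_or_lt_of_le hst with heq | hlt
  · subst heq
    simp [tsub_self]
  apply ENNReal.le_of_forall_pos_le_add
  intro ε hε hfin
  set δ : ℝ≥0 := ε / 8 with hδdef
  have hδ0 : 0 < δ := by positivity
  -- choice of t'
  have ht0 : t ≠ 0 := by rintro rfl; exact absurd hlt (by simp)
  obtain ⟨t'', ht''lt, ht''mass⟩ := exists_left_mass μ hcont t hδ0 ht0
  set t' : ℝ≥0 := max s t'' with ht'def
  have hst' : s ≤ t' := le_max_left _ _
  have ht't : t' < t := max_lt hlt ht''lt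
  have ht'mass : Tm t univ ≤ Tm t' univ + δ := by
    have h1 : ((μ t'').mass : ℝ≥0∞) ≤ ((μ t').mass : ℝ≥0∞) := by
      rw [FiniteMeasure.ennreal_mass, FiniteMeasure.ennreal_mass]
      exact happ _ _ (le_max_right _ _) univ
    have h2 : ((μ t).mass : ℝ≥0∞) ≤ ((μ t'').mass : ℝ≥0∞) + (δ : ℝ≥0∞) := by
      exact_mod_cast ht''mass
    calc Tm t univ = ((μ t).mass : ℝ≥0∞) := (FiniteMeasure.ennreal_mass).symm
      _ ≤ ((μ t'').mass : ℝ≥0∞) + (δ : ℝ≥0∞) := h2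
      _ ≤ ((μ t').mass : ℝ≥0∞) + (δ : ℝ≥0∞) := add_le_add_left h1 _
      _ = Tm t' univ + δ := by rw [FiniteMeasure.ennreal_mass]
  -- compact inner approximation
  set m : Measure (Fin d → ℝ) := (μ t).toMeasure - (μ s).toMeasure with hm
  have hmA : m A = Tm t A - Tm s A := Measure.sub_apply hA (hle hst)
  obtain ⟨K, hKA, hKcomp, hKlt⟩ :=
    hA.exists_isCompact_lt_add (μ := m) (measure_ne_top _ _)
      (ε := (δ : ℝ≥0∞)) (by exact_mod_cast hδ0.ne')
  have hKmeas : MeasurableSet K := hKcomp.measurableSet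
  have hmK : m K = Tm t K - Tm s K := Measure.sub_apply hKmeas (hle hst)
  -- per-index choices
  have hchoice : ∀ i : ℕ, ∃ (s' : ℝ≥0) (V : Set ℝ≥0) (U : Set (Fin d → ℝ)),
      s' ≤ sseq i ∧ IsOpen V ∧ Ico (sseq i) (tseq i) ⊆ V ∧ V ⊆ Ico s' (tseq i) ∧
      IsOpen U ∧ Aseq i ⊆ U ∧
      Tm (sseq i) univ ≤ Tm s' univ + (δ * (2:ℝ≥0)⁻¹ ^ i : ℝ≥0) ∧
      Tm (tseq i) U - Tm (sseq i) U
        ≤ (Tm (tseq i) (Aseq i) - Tm (sseq i) (Aseq i)) + (δ * (2:ℝ≥0)⁻¹ ^ i : ℝ≥0) := by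
    intro i
    set δi : ℝ≥0 := δ * (2:ℝ≥0)⁻¹ ^ i with hδi
    have hδi0 : 0 < δi := by positivity
    set mi : Measure (Fin d → ℝ) := (μ (tseq i)).toMeasure - (μ (sseq i)).toMeasure with hmi
    have hmiA : mi (Aseq i) = Tm (tseq i) (Aseq i) - Tm (sseq i) (Aseq i) :=
      Measure.sub_apply (hAseq i) (hle (hseq i))
    obtain ⟨U, hAU, hUopen, hUlt⟩ :=
      (Aseq i).exists_isOpen_lt_add (μ := mi) (measure_ne_top _ _)
        (ε := (δi : ℝ≥0∞)) (by exact_mod_cast hδi0.ne')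
    have hmiU : mi U = Tm (tseq i) U - Tm (sseq i) U :=
      Measure.sub_apply hUopen.measurableSet (hle (hseq i))
    by_cases hs0 : sseq i = 0
    · refine ⟨0, Ico 0 (tseq i), U, by rw [hs0], ?_, by rw [hs0], le_rfl,
        hUopen, hAU, by rw [hs0]; exact le_add_right le_rfl, ?_⟩
      · rw [show (0:ℝ≥0) = ⊥ from rfl, Set.Ico_bot]
        exact isOpen_Iio
      · rw [← hmiU, ← hmiA]
        exact hUlt.le
    · obtain ⟨s', hs'lt, hs'mass⟩ := exists_left_mass μ hcont (sseq i) hδi0 hs0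
      refine ⟨s', Ioo s' (tseq i), U, hs'lt.le, isOpen_Ioo,
        fun x hx => ⟨lt_of_lt_of_le hs'lt hx.1, hx.2⟩, Ioo_subset_Ico_self,
        hUopen, hAU, ?_, ?_⟩
      · have h2 : ((μ (sseq i)).mass : ℝ≥0∞) ≤ ((μ s').mass : ℝ≥0∞) + (δi : ℝ≥0∞) := by
          exact_mod_cast hs'mass
        rwa [FiniteMeasure.ennreal_mass, FiniteMeasure.ennreal_mass] at h2
      · rw [← hmiU, ← hmiA]
        exact hUlt.le
  choose s' V U hs'le hVopen hIcoV hVIco hUopen hAU hs'mass hUclose using hchoice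
  -- compactness argument
  set C : Set (ℝ≥0 × (Fin d → ℝ)) := Icc s t' ×ˢ K with hC
  have hCsub : C ⊆ ⋃ i, (V i ×ˢ U i) := by
    rintro ⟨r, x⟩ ⟨hr, hx⟩
    have hmem : (r, x) ∈ Ico s t ×ˢ A :=
      ⟨⟨hr.1, lt_of_le_of_lt hr.2 ht't⟩, hKA hx⟩
    rw [hunion] at hmem
    obtain ⟨i, hi⟩ := mem_iUnion.mp hmem
    exact mem_iUnion.mpr ⟨i, ⟨hIcoV i hi.1, hAU i hi.2⟩⟩
  obtain ⟨I, hI⟩ := (isCompact_Icc.prod hKcomp).elim_finite_subcover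
    (fun i => V i ×ˢ U i) (fun i => (hVopen i).prod (hUopen i)) hCsub
  -- finite subadditivity via the approximating measures
  have hfinsub : Tm t' K - Tm s K ≤ ∑ i ∈ I, (Tm (tseq i) (U i) - Tm (s' i) (U i)) := by
    have htend1 : Tendsto (fun n => lamN μ n (Ico s t' ×ˢ K)) atTop
        (𝓝 (Tm t' K - Tm s K)) := lamN_tendsto μ hcont hle hst' hKmeas
    have htend2 : Tendsto (fun n => ∑ i ∈ I, lamN μ n (Ico (s' i) (tseq i) ×ˢ U i)) atTop
        (𝓝 (∑ i ∈ I, (Tm (tseq i) (U i) - Tm (s' i) (U i)))) :=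
      tendsto_finset_sum I (fun i _ =>
        lamN_tendsto μ hcont hle ((hs'le i).trans (hseq i)) (hUopen i).measurableSet)
    apply le_of_tendsto_of_tendsto' htend1 htend2
    intro n
    calc lamN μ n (Ico s t' ×ˢ K)
        ≤ lamN μ n (⋃ i ∈ I, Ico (s' i) (tseq i) ×ˢ U i) := by
          apply measure_mono
          intro z hz
          have hzC : z ∈ C := ⟨Ico_subset_Icc_self hz.1, hz.2⟩
          obtain ⟨i, hiI, hiz⟩ := mem_iUnion₂.mp (hI hzC)
          exact mem_iUnion₂.mpr ⟨i, hiI, ⟨hVIco i hiz.1, hiz.2⟩⟩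
      _ ≤ ∑ i ∈ I, lamN μ n (Ico (s' i) (tseq i) ×ˢ U i) :=
          measure_biUnion_finset_le I _
  -- per-index estimate
  have hterm : ∀ i ∈ I, Tm (tseq i) (U i) - Tm (s' i) (U i)
      ≤ (Tm (tseq i) (Aseq i) - Tm (sseq i) (Aseq i)) + 2 * (δ * (2:ℝ≥0)⁻¹ ^ i : ℝ≥0) := by
    intro i _
    calc Tm (tseq i) (U i) - Tm (s' i) (U i)
        = (Tm (sseq i) (U i) - Tm (s' i) (U i)) + (Tm (tseq i) (U i) - Tm (sseq i) (U i)) :=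
          hsplit _ _ _ _ (hs'le i) (hseq i)
      _ ≤ (Tm (sseq i) univ - Tm (s' i) univ)
          + ((Tm (tseq i) (Aseq i) - Tm (sseq i) (Aseq i)) + (δ * (2:ℝ≥0)⁻¹ ^ i : ℝ≥0)) :=
          add_le_add (hdom _ _ (hs'le i) _ (hUopen i).measurableSet) (hUclose i)
      _ ≤ (δ * (2:ℝ≥0)⁻¹ ^ i : ℝ≥0)
          + ((Tm (tseq i) (Aseq i) - Tm (sseq i) (Aseq i)) + (δ * (2:ℝ≥0)⁻¹ ^ i : ℝ≥0)) := by
          apply add_le_add_left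
          rw [tsub_le_iff_right]
          exact (hs'mass i).trans_eq (add_comm _ _)
      _ = (Tm (tseq i) (Aseq i) - Tm (sseq i) (Aseq i)) + 2 * (δ * (2:ℝ≥0)⁻¹ ^ i : ℝ≥0) := by
          ring
  -- geometric sum bound
  have hgeom : ∑' i : ℕ, ((δ * (2:ℝ≥0)⁻¹ ^ i : ℝ≥0) : ℝ≥0∞) = (δ : ℝ≥0∞) * 2 := by
    have : ∀ i : ℕ, ((δ * (2:ℝ≥0)⁻¹ ^ i : ℝ≥0) : ℝ≥0∞) = (δ : ℝ≥0∞) * (2:ℝ≥0∞)⁻¹ ^ i := by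
      intro i
      push_cast
      ring
    rw [tsum_congr this, ENNReal.tsum_mul_left, ENNReal.tsum_geometric,
      ENNReal.one_sub_inv_two, inv_inv]
  have hsumδ : ∑ i ∈ I, ((δ * (2:ℝ≥0)⁻¹ ^ i : ℝ≥0) : ℝ≥0∞) ≤ (δ : ℝ≥0∞) * 2 := by
    rw [← hgeom]
    exact ENNReal.sum_le_tsum I
  -- final chain
  have hchain : Tm t A - Tm s A ≤ S + 6 * (δ : ℝ≥0∞) := by
    calc Tm t A - Tm s A = m A := hmA.symm
      _ ≤ m K + δ := hKlt.le
      _ = (Tm t K - Tm s K) + δ := by rw [hmK]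
      _ = ((Tm t' K - Tm s K) + (Tm t K - Tm t' K)) + δ := by
          rw [← hsplit _ _ _ _ hst' ht't.le]
      _ ≤ ((Tm t' K - Tm s K) + (Tm t univ - Tm t' univ)) + δ :=
          add_le_add_left (add_le_add_right (hdom _ _ ht't.le _ hKmeas) _) _
      _ ≤ ((Tm t' K - Tm s K) + δ) + δ := by
          apply add_le_add_left
          apply add_le_add_right
          rw [tsub_le_iff_right]
          exact ht'mass.trans_eq (add_comm _ _)
      _ ≤ (∑ i ∈ I, (Tm (tseq i) (U i) - Tm (s' i) (U i)) + δ) + δ :=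
          add_le_add_left (add_le_add_left hfinsub _) _
      _ ≤ (∑ i ∈ I, ((Tm (tseq i) (Aseq i) - Tm (sseq i) (Aseq i))
            + 2 * ((δ * (2:ℝ≥0)⁻¹ ^ i : ℝ≥0) : ℝ≥0∞)) + δ) + δ :=
          add_le_add_left (add_le_add_left (Finset.sum_le_sum hterm) _) _
      _ = (∑ i ∈ I, (Tm (tseq i) (Aseq i) - Tm (sseq i) (Aseq i))
            + 2 * ∑ i ∈ I, ((δ * (2:ℝ≥0)⁻¹ ^ i : ℝ≥0) : ℝ≥0∞)) + δ + δ := by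
          rw [Finset.sum_add_distrib, Finset.mul_sum]
      _ ≤ (S + 2 * ((δ:ℝ≥0∞) * 2)) + δ + δ := by
          apply add_le_add_left
          apply add_le_add_left
          exact add_le_add (ENNReal.sum_le_tsum I) (mul_le_mul_right hsumδ 2)
      _ = S + 6 * (δ : ℝ≥0∞) := by ring
  refine hchain.trans ?_
  gcongr
  have h6 : (6 : ℝ≥0) * δ ≤ ε := by
    rw [hδdef]
    rw [div_eq_mul_inv]
    calc (6:ℝ≥0) * (ε * 8⁻¹) = ε * (6 * 8⁻¹) := by ring
      _ ≤ ε * 1 := by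
          gcongr
          rw [← div_eq_mul_inv, div_le_one (by norm_num)]
          norm_num
      _ = ε := mul_one ε
  calc (6:ℝ≥0∞) * (δ:ℝ≥0∞) = ((6 * δ : ℝ≥0) : ℝ≥0∞) := by push_cast; ring
    _ ≤ (ε : ℝ≥0∞) := ENNReal.coe_le_coe.mpr h6
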